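/- arXiv:2212.14303 — 2 statements merged into one kernel-verified Lean document; each statement's English description precedes it below -/
import Mathlib

section
/- Let α > 0, δ ≥ 0, λ > 0 and t > 0. Then λ · (1/Γ(α)) ∫₀ᵗ (t−τ)^{α−1} τ^{α+δ−1} E_{α,α+δ}(−λ τ^α) dτ = t^{α+δ−1} [ 1/Γ(α+δ) − E_{α,α+δ}(−λ t^α) ]; that is, λ I^α applied to τ ↦ τ^{α+δ−1} E_{α,α+δ}(−λ τ^α) equals t^{α+δ−1}(Γ(α+δ)^{−1} − E_{α,α+δ}(−λ t^α)). -/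
open Real Set MeasureTheory intervalIntegral

lemma gamma_mul_le (a x : ℝ) (ha : 0 < a) (hx : 1 < x) :
    Real.Gamma x * (x - 1) ^ a ≤ Real.Gamma (x + a) := by
  have h0 : (0:ℝ) < x - 1 := by linarith
  have hG1 : 0 < Real.Gamma (x - 1) := Real.Gamma_pos_of_pos h0
  have hGx : 0 < Real.Gamma x := Real.Gamma_pos_of_pos (by linarith)
  have hGxa : 0 < Real.Gamma (x + a) := Real.Gamma_pos_of_pos (by linarith)
  have hslope := Real.convexOn_log_Gamma.slope_mono_adjacent
    (x := x - 1) (y := x) (z := x + a)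
    (mem_Ioi.mpr h0) (mem_Ioi.mpr (by linarith)) (by linarith) (by linarith)
  have hrec : Real.Gamma x = (x - 1) * Real.Gamma (x - 1) := by
    have := Real.Gamma_add_one (s := x - 1) h0.ne'
    simpa using this
  have hlog : Real.log (Real.Gamma x) - Real.log (Real.Gamma (x-1)) = Real.log (x - 1) := by
    rw [hrec, Real.log_mul h0.ne' hG1.ne']; ring
  simp only [Function.comp] at hslope
  have h1 : Real.log (x-1) ≤ (Real.log (Real.Gamma (x+a)) - Real.log (Real.Gamma x)) / a := by
    calc Real.log (x-1) = (Real.log (Real.Gamma x) - Real.log (Real.Gamma (x-1))) / (x - (x-1)) := by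
          rw [hlog, show x - (x-1) = 1 by ring, div_one]
      _ ≤ _ := by
          rw [show x + a - x = a by ring] at hslope; exact hslope
  have h2 : a * Real.log (x-1) + Real.log (Real.Gamma x) ≤ Real.log (Real.Gamma (x+a)) := by
    have := (le_div_iff₀ ha).mp h1
    linarith
  have := Real.exp_le_exp.mpr h2
  have h3 : (x-1) ^ a = Real.exp (a * Real.log (x-1)) := by
    rw [Real.rpow_def_of_pos h0, mul_comm]
  rw [Real.exp_add, Real.exp_log hGx, Real.exp_log hGxa, ← h3] at this
  rw [mul_comm]; exact this

lemma ml_summable {a b : ℝ} (z : ℝ) (ha : 0 < a) (hb : 0 < b) :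
    Summable (fun k : ℕ => z ^ k / Real.Gamma (a * k + b)) := by
  obtain ⟨K, hK⟩ : ∃ K : ℕ, ∀ k ≥ K, (2 * |z| + 1) ^ (1/a) + 2 ≤ a * k + b := by
    obtain ⟨K, hK⟩ := exists_nat_ge (((2 * |z| + 1) ^ (1/a) + 2 - b) / a)
    exact ⟨K, fun k hk => by
      have : ((2 * |z| + 1) ^ (1/a) + 2 - b) / a ≤ k := hK.trans (by exact_mod_cast Nat.cast_le.mpr hk)
      have := (div_le_iff₀ ha).mp this
      linarith⟩
  apply summable_of_ratio_norm_eventually_le (r := 1/2) (by norm_num)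
  filter_upwards [Filter.eventually_atTop.mpr ⟨K, hK⟩] with k hk
  have hx1 : 1 < a * k + b := by
    have h0 : (0:ℝ) ≤ (2 * |z| + 1) ^ (1/a) := Real.rpow_nonneg (by positivity) _
    linarith
  have hGx : 0 < Real.Gamma (a * k + b) := Real.Gamma_pos_of_pos (by linarith)
  have hGx' : 0 < Real.Gamma (a * (k+1) + b) := Real.Gamma_pos_of_pos (by linarith)
  have hpow : 2 * |z| + 1 ≤ (a * k + b - 1) ^ a := by
    have h1 : (2 * |z| + 1) ^ (1/a) ≤ a * k + b - 1 := by linarith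
    calc 2 * |z| + 1 = ((2 * |z| + 1) ^ (1/a)) ^ a := by
          rw [← Real.rpow_mul (by positivity), one_div, inv_mul_cancel₀ ha.ne', Real.rpow_one]
      _ ≤ (a * k + b - 1) ^ a := Real.rpow_le_rpow (Real.rpow_nonneg (by positivity) _) h1 ha.le
  have hkey : Real.Gamma (a * k + b) * (2 * |z| + 1) ≤ Real.Gamma (a * (k+1) + b) := by
    have := gamma_mul_le a (a * k + b) ha hx1
    have h2 : Real.Gamma (a*k+b) * (2*|z|+1) ≤ Real.Gamma (a*k+b) * (a*k+b-1)^a :=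
      mul_le_mul_of_nonneg_left hpow hGx.le
    have h3 : a * (k+1) + b = (a*k+b) + a := by push_cast; ring
    rw [h3]; linarith
  rw [norm_div, norm_div, norm_pow, norm_pow]
  simp only [Nat.cast_add, Nat.cast_one]
  rw [Real.norm_of_nonneg hGx.le, Real.norm_of_nonneg hGx'.le, mul_div_assoc',
    div_le_div_iff₀ hGx' hGx]
  calc ‖z‖ ^ (k+1) * Real.Gamma (a*k+b) = ‖z‖ ^ k * Real.Gamma (a*k+b) * ‖z‖ := by ring
    _ ≤ ‖z‖ ^ k * Real.Gamma (a*k+b) * ((2*|z|+1)/2) := by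
        apply mul_le_mul_of_nonneg_left _ (by positivity)
        rw [Real.norm_eq_abs]; linarith
    _ = 1/2 * (‖z‖^k * (Real.Gamma (a*k+b) * (2*|z|+1))) := by ring
    _ ≤ 1/2 * (‖z‖^k * Real.Gamma (a*(k+1)+b)) := by
        apply mul_le_mul_of_nonneg_left _ (by norm_num)
        exact mul_le_mul_of_nonneg_left hkey (by positivity)
    _ = 1/2 * ‖z‖^k * Real.Gamma (a*(k+1)+b) := by ring


lemma beta_integrable {a b x : ℝ} (ha : 0 < a) (hb : 0 < b) (hx : 0 < x) :
    IntervalIntegrable (fun τ => (x - τ) ^ (a - 1) * τ ^ (b - 1)) volume 0 x := by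
  have h1 : IntervalIntegrable (fun τ => (x - τ) ^ (a - 1) * τ ^ (b - 1)) volume 0 (x/2) := by
    apply IntervalIntegrable.continuousOn_mul
      (intervalIntegral.intervalIntegrable_rpow' (by linarith))
    apply ContinuousOn.rpow_const (by fun_prop)
    intro τ hτ
    rw [uIcc_of_le (by linarith)] at hτ
    exact Or.inl (by simp only [mem_Icc] at hτ; intro h; nlinarith [hτ.2])
  have h2 : IntervalIntegrable (fun τ => (x - τ) ^ (a - 1) * τ ^ (b - 1)) volume (x/2) x := by
    apply IntervalIntegrable.mul_continuousOn
    · have := (intervalIntegral.intervalIntegrable_rpow' (r := a - 1)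
        (a := 0) (b := x/2) (by linarith)).comp_sub_left x
      simpa [show x - x/2 = x/2 by ring] using this.symm
    · apply ContinuousOn.rpow_const (by fun_prop)
      intro τ hτ
      rw [uIcc_of_le (by linarith)] at hτ
      exact Or.inl (by simp only [mem_Icc] at hτ; intro h; nlinarith [hτ.1])
  exact h1.trans h2

lemma beta_value {a b x : ℝ} (ha : 0 < a) (hb : 0 < b) (hx : 0 < x) :
    ∫ τ in (0:ℝ)..x, (x - τ) ^ (a - 1) * τ ^ (b - 1)
      = Real.Gamma a * Real.Gamma b / Real.Gamma (a + b) * x ^ (a + b - 1) := by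
  have key := Complex.betaIntegral_scaled (b : ℂ) (a : ℂ) hx
  have hG := Complex.Gamma_mul_Gamma_eq_betaIntegral
    (s := (b:ℂ)) (t := (a:ℂ)) (by simpa using hb) (by simpa using ha)
  have hGab : (Complex.Gamma ((b:ℂ) + (a:ℂ))) ≠ 0 := by
    rw [show ((b:ℂ) + (a:ℂ)) = ((b + a : ℝ) : ℂ) by push_cast; ring, Complex.Gamma_ofReal]
    exact_mod_cast (Real.Gamma_pos_of_pos (by linarith)).ne'
  have hbeta : Complex.betaIntegral (b:ℂ) (a:ℂ)
      = Complex.Gamma (b:ℂ) * Complex.Gamma (a:ℂ) / Complex.Gamma ((b:ℂ) + (a:ℂ)) := by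
    field_simp [hG]
    rw [hG]; ring
  -- the complex integral is the coercion of the real one
  have hcoe : (∫ τ in (0:ℝ)..x, (τ:ℂ) ^ ((b:ℂ) - 1) * ((x:ℂ) - (τ:ℂ)) ^ ((a:ℂ) - 1))
      = ((∫ τ in (0:ℝ)..x, τ ^ (b - 1) * (x - τ) ^ (a - 1) : ℝ) : ℂ) := by
    rw [← intervalIntegral.integral_ofReal]
    apply intervalIntegral.integral_congr
    intro τ hτ
    rw [uIcc_of_le hx.le] at hτ
    obtain ⟨h0, h1⟩ := mem_Icc.mp hτ
    dsimp only
    rw [Complex.ofReal_mul, Complex.ofReal_cpow h0, Complex.ofReal_cpow (show (0:ℝ) ≤ x - τ by linarith)]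
    push_cast
    ring
  rw [hcoe, hbeta] at key
  have : ((∫ τ in (0:ℝ)..x, τ ^ (b - 1) * (x - τ) ^ (a - 1) : ℝ) : ℂ)
      = ((Real.Gamma a * Real.Gamma b / Real.Gamma (a + b) * x ^ (a + b - 1) : ℝ) : ℂ) := by
    rw [key]
    rw [show ((b:ℂ) + (a:ℂ) - 1) = (((b + a - 1 : ℝ)) : ℂ) by push_cast; ring]
    rw [show ((b:ℂ) + (a:ℂ)) = ((b + a : ℝ) : ℂ) by push_cast; ring]
    rw [Complex.Gamma_ofReal, Complex.Gamma_ofReal, Complex.Gamma_ofReal,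
      ← Complex.ofReal_cpow hx.le]
    push_cast
    rw [show a + b = b + a by ring]
    ring
  have hre := congrArg Complex.re this
  simp only [Complex.ofReal_re] at hre
  rw [← hre]
  apply intervalIntegral.integral_congr
  intro τ _
  ring

open Real Set MeasureTheory intervalIntegral


/-- The Mittag-Leffler function `E_{α,β}(z) = ∑_{k=0}^∞ z^k / Γ(αk+β)`.
(In Lean, `Real.Gamma` vanishes at the poles of `Γ`, and division by zero is zero,
so the summand is interpreted as `0` there.) -/
noncomputable def mittagLeffler (α β z : ℝ) : ℝ :=
  ∑' k : ℕ, z ^ k / Real.Gamma (α * k + β)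

/-- For `α > 0`, `δ ≥ 0`, `λ > 0` and `t > 0`,
`λ (1/Γ(α)) ∫₀ᵗ (t−τ)^{α−1} τ^{α+δ−1} E_{α,α+δ}(−λ τ^α) dτ
  = t^{α+δ−1} (Γ(α+δ)⁻¹ − E_{α,α+δ}(−λ t^α))`. -/
theorem RL_integral_mittagLeffler_shift (α δ lam t : ℝ) (hα : 0 < α) (hδ : 0 ≤ δ)
    (hlam : 0 < lam) (ht : 0 < t) :
    lam * ((1 / Real.Gamma α) *
        ∫ τ in (0:ℝ)..t,
          (t - τ) ^ (α - 1) * (τ ^ (α + δ - 1) * mittagLeffler α (α + δ) (-(lam * τ ^ α))))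
      = t ^ (α + δ - 1) * ((Real.Gamma (α + δ))⁻¹ - mittagLeffler α (α + δ) (-(lam * t ^ α))) := by

  have hGα : 0 < Real.Gamma α := Real.Gamma_pos_of_pos hα
  have hβ : 0 < α + δ := by linarith
  have hp : ∀ k : ℕ, 0 < α * k + (α + δ) := fun k => by positivity
  have hq : ∀ k : ℕ, 0 < α + (α * k + (α + δ)) := fun k => by positivity
  set g : ℕ → ℝ → ℝ := fun k τ =>
    ((-lam) ^ k / Real.Gamma (α * k + (α + δ))) *
      ((t - τ) ^ (α - 1) * τ ^ (α * k + (α + δ) - 1)) with hg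
  -- pointwise series identity on Ioc 0 t
  have hpt : ∀ τ ∈ Ioc (0:ℝ) t,
      (t - τ) ^ (α - 1) * (τ ^ (α + δ - 1) * mittagLeffler α (α + δ) (-(lam * τ ^ α)))
        = ∑' k : ℕ, g k τ := by
    intro τ hτ
    rw [mittagLeffler, ← tsum_mul_left, ← tsum_mul_left]
    apply tsum_congr
    intro k
    have hτ0 : 0 < τ := hτ.1
    have hk : (τ ^ α) ^ k = τ ^ (α * k) := by
      rw [← Real.rpow_natCast (τ ^ α) k, ← Real.rpow_mul hτ0.le]
    rw [hg]
    dsimp only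
    rw [show -(lam * τ ^ α) = (-lam) * τ ^ α by ring, mul_pow, hk,
      show α * k + (α + δ) - 1 = (α + δ - 1) + α * k by ring,
      Real.rpow_add hτ0]
    ring
  -- integrability of each term
  have hint : ∀ k : ℕ, Integrable (g k) (volume.restrict (Ioc (0:ℝ) t)) := by
    intro k
    exact ((beta_integrable hα (hp k) ht).1).const_mul _
  -- value of each integral
  have hval : ∀ (c : ℝ) (k : ℕ),
      ∫ τ in Ioc (0:ℝ) t, c * ((t - τ) ^ (α - 1) * τ ^ (α * k + (α + δ) - 1))
        = c * (Real.Gamma α * Real.Gamma (α * k + (α + δ)) /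
            Real.Gamma (α + (α * k + (α + δ))) * t ^ (α + (α * k + (α + δ)) - 1)) := by
    intro c k
    rw [MeasureTheory.integral_const_mul, ← intervalIntegral.integral_of_le ht.le,
      beta_value hα (hp k) ht]
  -- norm integrals are summable
  have hsum : Summable fun k : ℕ => ∫ τ in Ioc (0:ℝ) t, ‖g k τ‖ := by
    apply Summable.congr (f := fun k : ℕ =>
      (lam ^ k / Real.Gamma (α * k + (α + δ))) *
        (Real.Gamma α * Real.Gamma (α * k + (α + δ)) /
          Real.Gamma (α + (α * k + (α + δ))) * t ^ (α + (α * k + (α + δ)) - 1)))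
    · -- summability of the explicit formula
      apply Summable.congr (f := fun k : ℕ =>
        ((lam * t ^ α) ^ k / Real.Gamma (α * k + (2 * α + δ))) *
          (Real.Gamma α * t ^ (2 * α + δ - 1)))
      · exact (ml_summable (lam * t ^ α) hα (by linarith)).mul_right _
      · intro k
        have ht1 : t ^ (α + (α * k + (α + δ)) - 1)
            = (t ^ α) ^ k * t ^ (2 * α + δ - 1) := by
          rw [show α + (α * (k:ℝ) + (α + δ)) - 1 = α * k + (2 * α + δ - 1) by ring,
            Real.rpow_add ht, ← Real.rpow_natCast (t ^ α) k, ← Real.rpow_mul ht.le]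
        have hQ : α + (α * (k:ℝ) + (α + δ)) = α * k + (2 * α + δ) := by ring
        rw [ht1, hQ, mul_pow]
        have h1 := (Real.Gamma_pos_of_pos (hp k)).ne'
        have h2 := (Real.Gamma_pos_of_pos (show (0:ℝ) < α * k + (2*α+δ) by positivity)).ne'
        field_simp
    · intro k
      have : ∀ τ ∈ Ioc (0:ℝ) t, ‖g k τ‖
          = (lam ^ k / Real.Gamma (α * k + (α + δ))) *
            ((t - τ) ^ (α - 1) * τ ^ (α * k + (α + δ) - 1)) := by
        intro τ hτ
        have h1 : (0:ℝ) ≤ (t - τ) ^ (α - 1) * τ ^ (α * k + (α + δ) - 1) :=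
          mul_nonneg (Real.rpow_nonneg (by linarith [hτ.2]) _) (Real.rpow_nonneg hτ.1.le _)
        rw [hg]
        dsimp only
        rw [Real.norm_eq_abs, abs_mul, abs_of_nonneg h1, abs_div, abs_pow, abs_neg,
          abs_of_pos hlam, abs_of_pos (Real.Gamma_pos_of_pos (hp k))]
      rw [setIntegral_congr_fun measurableSet_Ioc this, hval]
  -- interchange sum and integral
  rw [intervalIntegral.integral_of_le ht.le,
    setIntegral_congr_fun measurableSet_Ioc hpt,
    ← MeasureTheory.integral_tsum_of_summable_integral_norm hint hsum]
  have hgi : ∀ k : ℕ, ∫ τ in Ioc (0:ℝ) t, g k τ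
      = ((-lam) ^ k / Real.Gamma (α * k + (α + δ))) *
        (Real.Gamma α * Real.Gamma (α * k + (α + δ)) /
          Real.Gamma (α + (α * k + (α + δ))) * t ^ (α + (α * k + (α + δ)) - 1)) := by
    intro k; rw [hg]; exact hval _ k
  simp_rw [hgi]
  -- now expand the RHS Mittag-Leffler function
  have hS : Summable fun k : ℕ => (-(lam * t ^ α)) ^ k / Real.Gamma (α * k + (α + δ)) :=
    ml_summable _ hα hβ
  rw [mittagLeffler, Summable.tsum_eq_zero_add hS]
  simp only [pow_zero, Nat.cast_zero, mul_zero, zero_add]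
  rw [show (1:ℝ) / Real.Gamma (α + δ) = (Real.Gamma (α + δ))⁻¹ by rw [one_div]]
  rw [sub_add_cancel_left, mul_neg, ← tsum_mul_left, ← tsum_mul_left, ← tsum_mul_left, ← tsum_neg]
  apply tsum_congr
  intro k
  have hQ : α * ((k:ℝ) + 1) + (α + δ) = α + (α * k + (α + δ)) := by ring
  push_cast
  rw [hQ]
  have ht1 : t ^ (α + (α * (k:ℝ) + (α + δ)) - 1)
      = (t ^ α) ^ (k + 1) * t ^ (α + δ - 1) := by
    rw [show α + (α * (k:ℝ) + (α + δ)) - 1 = α * ((k:ℕ) + 1 : ℕ) + (α + δ - 1) by push_cast; ring,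
      Real.rpow_add ht, ← Real.rpow_natCast (t ^ α) (k+1), ← Real.rpow_mul ht.le]
  rw [ht1, show -(lam * t ^ α) = (-lam) * t ^ α by ring, mul_pow, pow_succ (-lam) k]
  have h1 := (Real.Gamma_pos_of_pos (hp k)).ne'
  have h2 := (Real.Gamma_pos_of_pos (hq k)).ne'
  field_simp
end

section
/- Let α > 0, γ > 0, λ > 0 and t > 0. Then (1/Γ(γ)) ∫₀ᵗ (t−τ)^{γ−1} E_{α,1}(−λ τ^α) dτ = t^γ E_{α,γ+1}(−λ t^α); that is, I^γ applied to τ ↦ E_{α,1}(−λ τ^α) equals t^γ E_{α,γ+1}(−λ t^α). -/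
open MeasureTheory Set intervalIntegral

lemma beta_real (p q t : ℝ) (hp : 0 < p) (hq : 0 < q) (ht : 0 < t) :
    ∫ τ in (0:ℝ)..t, τ ^ (p - 1) * (t - τ) ^ (q - 1)
      = Real.Gamma p * Real.Gamma q / Real.Gamma (p + q) * t ^ (p + q - 1) := by
  have hGpq : Real.Gamma (p + q) ≠ 0 := (Real.Gamma_pos_of_pos (by linarith)).ne'
  have key := Complex.betaIntegral_scaled (p : ℂ) (q : ℂ) ht
  have hB : Complex.Gamma p * Complex.Gamma q
      = Complex.Gamma (p + q) * Complex.betaIntegral p q :=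
    Complex.Gamma_mul_Gamma_eq_betaIntegral (by simpa using hp) (by simpa using hq)
  have hGpqC : Complex.Gamma ((p : ℂ) + q) ≠ 0 := by
    rw [show ((p : ℂ) + q) = ((p + q : ℝ) : ℂ) by push_cast; ring, Complex.Gamma_ofReal]
    exact_mod_cast hGpq
  have hBeta : Complex.betaIntegral p q = Complex.Gamma p * Complex.Gamma q / Complex.Gamma (p + q) := by
    rw [eq_div_iff hGpqC, mul_comm]
    exact hB.symm
  have hcongr : (∫ x in (0:ℝ)..t, (x : ℂ) ^ ((p : ℂ) - 1) * ((t : ℂ) - x) ^ ((q : ℂ) - 1))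
      = ((∫ τ in (0:ℝ)..t, τ ^ (p - 1) * (t - τ) ^ (q - 1) : ℝ) : ℂ) := by
    rw [← intervalIntegral.integral_ofReal]
    refine intervalIntegral.integral_congr fun x hx => ?_
    rw [uIcc_of_le ht.le] at hx
    rw [Complex.ofReal_mul, Complex.ofReal_cpow hx.1, Complex.ofReal_cpow (by linarith [hx.2] : (0:ℝ) ≤ t - x)]
    push_cast
    ring
  rw [hcongr, hBeta] at key
  have : ((∫ τ in (0:ℝ)..t, τ ^ (p - 1) * (t - τ) ^ (q - 1) : ℝ) : ℂ)
      = ((Real.Gamma p * Real.Gamma q / Real.Gamma (p + q) * t ^ (p + q - 1) : ℝ) : ℂ) := by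
    rw [key]
    rw [Complex.ofReal_mul, Complex.ofReal_cpow ht.le]
    rw [Complex.ofReal_div, Complex.ofReal_mul, ← Complex.Gamma_ofReal, ← Complex.Gamma_ofReal,
      ← Complex.Gamma_ofReal]
    push_cast
    ring
  exact_mod_cast this

lemma beta_integrable_s8 (p q t : ℝ) (hp : 0 < p) (hq : 0 < q) (ht : 0 < t) :
    IntervalIntegrable (fun τ => τ ^ (p - 1) * (t - τ) ^ (q - 1)) volume 0 t := by
  have h1 : IntervalIntegrable (fun τ => τ ^ (p - 1) * (t - τ) ^ (q - 1)) volume 0 (t / 2) := by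
    apply IntervalIntegrable.mul_continuousOn
    · exact intervalIntegral.intervalIntegrable_rpow' (by linarith)
    · apply ContinuousOn.rpow_const (continuous_const.sub continuous_id).continuousOn
      intro x hx
      rw [uIcc_of_le (by linarith : (0:ℝ) ≤ t / 2)] at hx
      left
      have := hx.2
      exact sub_ne_zero.mpr (by linarith : t ≠ x)
  have h2 : IntervalIntegrable (fun τ => τ ^ (p - 1) * (t - τ) ^ (q - 1)) volume (t / 2) t := by
    apply IntervalIntegrable.continuousOn_mul
    · have hf : IntervalIntegrable (fun u : ℝ => u ^ (q - 1)) volume (t / 2) 0 :=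
        intervalIntegral.intervalIntegrable_rpow' (by linarith)
      have := hf.comp_sub_left t
      rw [show t - t / 2 = t / 2 by ring, sub_zero] at this
      exact this
    · apply ContinuousOn.rpow_const continuous_id.continuousOn
      intro x hx
      rw [uIcc_of_le (by linarith : t / 2 ≤ t)] at hx
      left
      simp only [id_eq]
      have := hx.1
      exact ne_of_gt (by linarith : (0:ℝ) < x)
  exact h1.trans h2
open MeasureTheory Set

lemma ml_summable_s8 {α β x : ℝ} (hα : 0 < α) (hβ : 0 < β) (hx : 0 ≤ x) :
    Summable fun k : ℕ => x ^ k / Real.Gamma (α * k + β) := by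
  set w : ℝ := max 1 (2 * x) with hw
  have hw1 : 1 ≤ w := le_max_left _ _
  have hwx : 2 * x ≤ w := le_max_right _ _
  have hw0 : 0 ≤ w := by linarith
  set z : ℝ := w ^ (2 / α) with hz
  have hz1 : 1 ≤ z := Real.one_le_rpow hw1 (by positivity)
  set K : ℕ := ⌈4 / α⌉₊ with hK
  rw [← summable_nat_add_iff K]
  have key : ∀ j : ℕ, x ^ (j + K) / Real.Gamma (α * ((j + K : ℕ) : ℝ) + β)
      ≤ (Real.exp z * (1 / 2) ^ K) * (1 / 2) ^ j := by
    intro j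
    set k : ℕ := j + K with hk
    have hαk : 4 ≤ α * k := by
      have h1 : (4 / α : ℝ) ≤ K := Nat.le_ceil _
      have h2 : (K : ℝ) ≤ k := by exact_mod_cast Nat.le_add_left K j
      calc (4:ℝ) = α * (4 / α) := by field_simp
        _ ≤ α * k := by apply mul_le_mul_of_nonneg_left (h1.trans h2) hα.le
    set m : ℕ := ⌊α * k + β⌋₊ - 1 with hm
    have hfl : 1 ≤ ⌊α * k + β⌋₊ := by
      apply Nat.le_floor
      push_cast
      linarith
    have hm1 : (m : ℝ) + 1 = (⌊α * k + β⌋₊ : ℝ) := by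
      rw [hm]
      push_cast [Nat.cast_sub hfl]
      ring
    have hmle : (m : ℝ) + 1 ≤ α * k + β := by
      rw [hm1]; exact Nat.floor_le (by linarith)
    have hmge : α * k + β - 2 ≤ m := by
      have := Nat.lt_floor_add_one (α * k + β)
      linarith [hm1 ▸ this]
    have hΓpos : 0 < Real.Gamma (α * k + β) := Real.Gamma_pos_of_pos (by linarith)
    have hfact : (m.factorial : ℝ) ≤ Real.Gamma (α * k + β) := by
      have h2m : (2:ℝ) ≤ (m : ℝ) + 1 := by linarith
      have := Real.Gamma_strictMonoOn_Ici.monotoneOn (a := ((m:ℝ) + 1)) (b := α * k + β)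
        (by simpa using h2m) (by simp; linarith) hmle
      rwa [Real.Gamma_nat_eq_factorial] at this
    have hxk : x ^ k ≤ z ^ m * (1 / 2) ^ k := by
      have h2x : (2 * x) ^ k ≤ w ^ k := pow_le_pow_left₀ (by linarith) hwx k
      have hwz : w ^ k ≤ z ^ m := by
        have e1 : w ^ k = w ^ (k : ℝ) := (Real.rpow_natCast w k).symm
        have e2 : z ^ m = w ^ ((2 / α) * m) := by
          rw [Real.rpow_mul hw0, ← Real.rpow_natCast (w ^ (2/α)) m]
        rw [e1, e2]
        apply Real.rpow_le_rpow_of_exponent_le hw1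
        rw [div_mul_eq_mul_div, le_div_iff₀ hα]
        have : α * k / 2 ≤ (m : ℝ) := by linarith
        linarith
      calc x ^ k = (2 * x) ^ k * (1 / 2) ^ k := by
            rw [← mul_pow]; ring_nf
        _ ≤ w ^ k * (1 / 2) ^ k := by
            apply mul_le_mul_of_nonneg_right h2x (by positivity)
        _ ≤ z ^ m * (1 / 2) ^ k := by
            apply mul_le_mul_of_nonneg_right hwz (by positivity)
    have hzm : z ^ m / m.factorial ≤ Real.exp z := by
      have h1 : z ^ m / m.factorial ≤ ∑ i ∈ Finset.range (m + 1), z ^ i / i.factorial := by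
        apply Finset.single_le_sum (f := fun i => z ^ i / (i.factorial : ℝ))
          (fun i _ => by positivity) (Finset.self_mem_range_succ m)
      exact h1.trans (Real.sum_le_exp_of_nonneg (by linarith) (m + 1))
    have hfpos : (0:ℝ) < m.factorial := by exact_mod_cast m.factorial_pos
    calc x ^ k / Real.Gamma (α * k + β) ≤ x ^ k / m.factorial :=
          div_le_div_of_nonneg_left (by positivity) hfpos hfact
      _ ≤ (z ^ m * (1 / 2) ^ k) / m.factorial := by
          gcongr
      _ = (z ^ m / m.factorial) * (1 / 2) ^ k := by ring
      _ ≤ Real.exp z * (1 / 2) ^ k := by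
          apply mul_le_mul_of_nonneg_right hzm (by positivity)
      _ = (Real.exp z * (1 / 2) ^ K) * (1 / 2) ^ j := by
          rw [hk, pow_add]; ring
  apply Summable.of_nonneg_of_le (fun j => by positivity) key
  exact (summable_geometric_of_lt_one (by norm_num) (by norm_num)).mul_left _

/-- For `α > 0`, `γ > 0`, `λ > 0` and `t > 0`,
`(1/Γ(γ)) ∫₀ᵗ (t−τ)^{γ−1} E_{α,1}(−λ τ^α) dτ = t^γ E_{α,γ+1}(−λ t^α)`. -/
theorem RL_integral_mittagLeffler_gamma (α γ lam t : ℝ) (hα : 0 < α) (hγ : 0 < γ)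
    (hlam : 0 < lam) (ht : 0 < t) :
    (1 / Real.Gamma γ) * ∫ τ in (0:ℝ)..t, (t - τ) ^ (γ - 1) * mittagLeffler α 1 (-(lam * τ ^ α))
      = t ^ γ * mittagLeffler α (γ + 1) (-(lam * t ^ α)) := by
  have hGγ : 0 < Real.Gamma γ := Real.Gamma_pos_of_pos hγ
  have hGk : ∀ k : ℕ, 0 < Real.Gamma (α * k + 1) := fun k => Real.Gamma_pos_of_pos (by positivity)
  set F : ℕ → ℝ → ℝ :=
    fun k τ => (-lam) ^ k / Real.Gamma (α * k + 1) * (τ ^ (α * k) * (t - τ) ^ (γ - 1)) with hF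
  have hval : ∀ k : ℕ, ∫ τ in (0:ℝ)..t, τ ^ (α * k) * (t - τ) ^ (γ - 1)
      = Real.Gamma (α * k + 1) * Real.Gamma γ / Real.Gamma (α * k + 1 + γ) * t ^ (α * k + γ) := by
    intro k
    have h := beta_real (α * k + 1) γ t (by positivity) hγ ht
    rw [show α * (k:ℝ) + 1 - 1 = α * k by ring, show α * (k:ℝ) + 1 + γ - 1 = α * k + γ by ring] at h
    exact h
  have hii : ∀ k : ℕ, IntervalIntegrable (fun τ => τ ^ (α * k) * (t - τ) ^ (γ - 1)) volume 0 t := by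
    intro k
    have h := beta_integrable_s8 (α * k + 1) γ t (by positivity) hγ ht
    simpa [show α * (k:ℝ) + 1 - 1 = α * k by ring] using h
  have hFint : ∀ k : ℕ, IntegrableOn (F k) (Ioc 0 t) volume := by
    intro k
    exact ((intervalIntegrable_iff_integrableOn_Ioc_of_le ht.le).mp (hii k)).const_mul
      ((-lam) ^ k / Real.Gamma (α * k + 1))
  have epow : t ^ (α * (0:ℕ) + γ) = t ^ γ := by norm_num
  have e1 : ∀ k : ℕ, t ^ (α * (k:ℝ) + γ) = (t ^ α) ^ k * t ^ γ := by
    intro k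
    rw [Real.rpow_add ht, ← Real.rpow_natCast (t ^ α) k, ← Real.rpow_mul ht.le]
  have hnorm : ∀ k : ℕ, (∫ τ in Ioc (0:ℝ) t, ‖F k τ‖)
      = (Real.Gamma γ * t ^ γ) * ((lam * t ^ α) ^ k / Real.Gamma (α * k + (γ + 1))) := by
    intro k
    have h1 : EqOn (fun τ => ‖F k τ‖)
        (fun τ => lam ^ k / Real.Gamma (α * k + 1) * (τ ^ (α * k) * (t - τ) ^ (γ - 1)))
        (Ioc (0:ℝ) t) := by
      intro τ hτ
      have h2 : |(-lam) ^ k / Real.Gamma (α * k + 1)| = lam ^ k / Real.Gamma (α * k + 1) := by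
        rw [abs_div, abs_pow, abs_neg, abs_of_pos hlam, abs_of_pos (hGk k)]
      have h3 : (0:ℝ) ≤ τ ^ (α * k) * (t - τ) ^ (γ - 1) :=
        mul_nonneg (Real.rpow_nonneg hτ.1.le _) (Real.rpow_nonneg (by linarith [hτ.2]) _)
      simp only [hF, Real.norm_eq_abs, abs_mul, h2, abs_of_nonneg h3]
    rw [setIntegral_congr_fun measurableSet_Ioc h1, MeasureTheory.integral_const_mul,
      ← intervalIntegral.integral_of_le ht.le, hval k, e1 k, mul_pow,
      show α * (k:ℝ) + 1 + γ = α * k + (γ + 1) by ring]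
    field_simp
  have hsum : Summable fun k : ℕ => ∫ τ in Ioc (0:ℝ) t, ‖F k τ‖ := by
    have := (ml_summable_s8 hα (by linarith : (0:ℝ) < γ + 1)
      (by positivity : (0:ℝ) ≤ lam * t ^ α)).mul_left (Real.Gamma γ * t ^ γ)
    exact this.congr fun k => (hnorm k).symm
  have hpt : EqOn (fun τ => (t - τ) ^ (γ - 1) * mittagLeffler α 1 (-(lam * τ ^ α)))
      (fun τ => ∑' k, F k τ) (Ioc (0:ℝ) t) := by
    intro τ hτ
    simp only [mittagLeffler]
    rw [← tsum_mul_left]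
    refine tsum_congr fun k => ?_
    have e : (-(lam * τ ^ α)) ^ k = (-lam) ^ k * τ ^ (α * k) := by
      rw [show -(lam * τ ^ α) = (-lam) * τ ^ α by ring, mul_pow,
        ← Real.rpow_natCast (τ ^ α) k, ← Real.rpow_mul hτ.1.le]
    simp only [hF]
    rw [e]
    ring
  rw [intervalIntegral.integral_of_le ht.le, setIntegral_congr_fun measurableSet_Ioc hpt,
    ← MeasureTheory.integral_tsum_of_summable_integral_norm hFint hsum]
  have hFval : ∀ k : ℕ, (∫ τ in Ioc (0:ℝ) t, F k τ)
      = Real.Gamma γ * (t ^ γ * ((-(lam * t ^ α)) ^ k / Real.Gamma (α * k + (γ + 1)))) := by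
    intro k
    simp only [hF]
    rw [MeasureTheory.integral_const_mul, ← intervalIntegral.integral_of_le ht.le, hval k, e1 k,
      show (-(lam * t ^ α)) ^ k = (-lam) ^ k * (t ^ α) ^ k by rw [← mul_pow]; ring_nf,
      show α * (k:ℝ) + 1 + γ = α * k + (γ + 1) by ring]
    field_simp
  rw [tsum_congr hFval, tsum_mul_left, tsum_mul_left]
  simp only [mittagLeffler]
  field_simp
end
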